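/- Let θ, λ, s > 0, c > 0, C > 0, let (p_j)_{j∈J} be numbers in [0,1] and (s_j)_{j∈J} nonnegative numbers indexed by a finite set J with Σ_j λ·p_j·s_j ≤ s/c. Let (C_j)_{j∈J} be independent Bernoulli random variables with parameters p_j, and let (X_j)_{j∈J} be nonnegative random variables, independent of each other and of the (C_j), satisfying E[e^{2λθX_j}] ≤ 1 + 2λθ·C·s_j for every j. Then E[exp(θ·(2s + Σ_j 2λ·C_j·X_j))] ≤ exp(2θs·(1 + C/c)). -/

import Mathlib

open MeasureTheory ProbabilityTheory

lemma indep_prod_aux {Ω : Type*} [MeasurableSpace Ω] {P : Measure Ω}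
    {J : Type*} (Cb X : J → Ω → ℝ)
    (hInd : iIndepFun (Sum.elim Cb X) P)
    (hfmeas : ∀ i, Measurable (Sum.elim Cb X i))
    (r : ℝ) (S : Finset J) (i : J) (hiS : i ∉ S) :
    IndepFun (fun ω => ∏ k ∈ S, Real.exp (r * (Cb k ω * X k ω)))
      (fun ω => Real.exp (r * (Cb i ω * X i ω))) P := by
  classical
  set f := Sum.elim Cb X with hf
  set S' : Finset (J ⊕ J) := S.image Sum.inl ∪ S.image Sum.inr with hS'
  set T' : Finset (J ⊕ J) := {Sum.inl i, Sum.inr i} with hT'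
  have hdisj : Disjoint S' T' := by
    simp only [Finset.disjoint_left, hS', hT', Finset.mem_union, Finset.mem_image,
      Finset.mem_insert, Finset.mem_singleton]
    rintro x (⟨j, hj, rfl⟩ | ⟨j, hj, rfl⟩) (h | h) <;> simp_all
  have base := hInd.indepFun_finset S' T' hdisj hfmeas
  have hmem1 : ∀ j ∈ S, Sum.inl j ∈ S' := fun j hj =>
    Finset.mem_union_left _ (Finset.mem_image_of_mem _ hj)
  have hmem2 : ∀ j ∈ S, Sum.inr j ∈ S' := fun j hj =>
    Finset.mem_union_right _ (Finset.mem_image_of_mem _ hj)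
  set F : ({x // x ∈ S'} → ℝ) → ℝ := fun v =>
    ∏ k ∈ S.attach, Real.exp (r * (v ⟨Sum.inl k.1, hmem1 _ k.2⟩ * v ⟨Sum.inr k.1, hmem2 _ k.2⟩))
    with hF
  set G : ({x // x ∈ T'} → ℝ) → ℝ := fun v =>
    Real.exp (r * (v ⟨Sum.inl i, by simp [hT']⟩ * v ⟨Sum.inr i, by simp [hT']⟩)) with hG
  have hFmeas : Measurable F := by
    apply Finset.measurable_prod
    intro k _
    fun_prop
  have hGmeas : Measurable G := by fun_prop
  have := base.comp hFmeas hGmeas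
  have e1 : (F ∘ fun ω (k : S') => f k ω) = fun ω => ∏ k ∈ S, Real.exp (r * (Cb k ω * X k ω)) := by
    funext ω
    simp only [Function.comp_apply, hF]
    rw [← Finset.prod_attach S (fun k => Real.exp (r * (Cb k ω * X k ω)))]
    rfl
  have e2 : (G ∘ fun ω (k : T') => f k ω) = fun ω => Real.exp (r * (Cb i ω * X i ω)) := by
    funext ω; rfl
  rw [e1, e2] at this
  exact this

/-- Exponential moment bound: for independent Bernoulli variables `Cb j` (parameter `p j`)
and independent nonnegative variables `X j` with `E[exp(2λθ X j)] ≤ 1 + 2λθ C (sc j)`, and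
`∑ λ (p j) (sc j) ≤ s/c`, one has
`E[exp(θ(2s + ∑ 2λ (Cb j) (X j)))] ≤ exp(2θs(1 + C/c))`. -/
theorem stmt_17 {Ω : Type*} [MeasurableSpace Ω] (P : Measure Ω) [IsProbabilityMeasure P]
    {J : Type*} [Fintype J]
    (θ lam s c C : ℝ) (hθ : 0 < θ) (hlam : 0 < lam) (hs : 0 < s) (hc : 0 < c) (hC : 0 < C)
    (p sc : J → ℝ) (hp0 : ∀ j, 0 ≤ p j) (hp1 : ∀ j, p j ≤ 1) (hsc : ∀ j, 0 ≤ sc j)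
    (hsum : ∑ j, lam * p j * sc j ≤ s / c)
    (Cb X : J → Ω → ℝ)
    (hCbmeas : ∀ j, Measurable (Cb j)) (hXmeas : ∀ j, Measurable (X j))
    (hCb01 : ∀ j ω, Cb j ω = 0 ∨ Cb j ω = 1)
    (hCbd : ∀ j, P {ω | Cb j ω = 1} = ENNReal.ofReal (p j))
    (hXnonneg : ∀ j ω, 0 ≤ X j ω)
    (hInd : iIndepFun (Sum.elim Cb X) P)
    (hmom : ∀ j, ∫ ω, Real.exp (2 * lam * θ * X j ω) ∂P ≤ 1 + 2 * lam * θ * C * sc j) :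
    ∫ ω, Real.exp (θ * (2 * s + ∑ j, 2 * lam * Cb j ω * X j ω)) ∂P
      ≤ Real.exp (2 * θ * s * (1 + C / c)) := by
  classical
  have hfmeas : ∀ i, Measurable (Sum.elim Cb X i) := by
    rintro (j | j); exacts [hCbmeas j, hXmeas j]
  set r : ℝ := 2 * lam * θ with hr
  have hr0 : 0 < r := by positivity
  set g : J → Ω → ℝ := fun j ω => Real.exp (r * (Cb j ω * X j ω)) with hg
  have hCbnonneg : ∀ j ω, 0 ≤ Cb j ω := by
    intro j ω; rcases hCb01 j ω with h | h <;> rw [h] <;> norm_num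
  have hg1 : ∀ j ω, 1 ≤ g j ω := fun j ω =>
    Real.one_le_exp (mul_nonneg hr0.le (mul_nonneg (hCbnonneg j ω) (hXnonneg j ω)))
  have hgmeas : ∀ j, Measurable (g j) := fun j =>
    (((hCbmeas j).mul (hXmeas j)).const_mul r).exp
  -- rewrite the integrand
  have hrw : (fun ω => Real.exp (θ * (2 * s + ∑ j, 2 * lam * Cb j ω * X j ω)))
      = fun ω => Real.exp (2 * θ * s) * ∏ j, g j ω := by
    funext ω
    rw [mul_add, Real.exp_add]
    congr 1
    · ring_nf
    · rw [Finset.mul_sum, Real.exp_sum]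
      refine Finset.prod_congr rfl fun j _ => ?_
      rw [hg, hr]; ring_nf
  rw [hrw]
  by_cases hint : Integrable (fun ω => ∏ j, g j ω) P
  swap
  · have : ¬ Integrable (fun ω => Real.exp (2 * θ * s) * ∏ j, g j ω) P := by
      intro h
      have := h.const_mul (Real.exp (2 * θ * s))⁻¹
      apply hint
      convert this using 1
      funext ω
      field_simp
    rw [integral_undef this]
    positivity
  -- each g j is integrable
  have hgint : ∀ j, Integrable (g j) P := by
    intro j
    refine Integrable.mono' hint (hgmeas j).aestronglyMeasurable (ae_of_all _ fun ω => ?_)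
    rw [Real.norm_of_nonneg (Real.exp_pos _).le]
    have hone : (1:ℝ) ≤ ∏ k ∈ Finset.univ.erase j, g k ω := by
      calc (1:ℝ) = ∏ _k ∈ Finset.univ.erase j, (1:ℝ) := by simp
        _ ≤ ∏ k ∈ Finset.univ.erase j, g k ω :=
            Finset.prod_le_prod (by simp) (fun k _ => hg1 k ω)
    calc g j ω = g j ω * 1 := by ring
      _ ≤ g j ω * ∏ k ∈ Finset.univ.erase j, g k ω :=
          mul_le_mul_of_nonneg_left hone (Real.exp_pos _).le
      _ = ∏ k, g k ω := Finset.mul_prod_erase Finset.univ (fun k => g k ω) (Finset.mem_univ j)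
  -- product of integrals
  have hprodint : ∀ S : Finset J, ∫ ω, ∏ k ∈ S, g k ω ∂P = ∏ k ∈ S, ∫ ω, g k ω ∂P := by
    intro S
    induction S using Finset.induction_on with
    | empty => simp
    | @insert i S hiS ih =>
      have hIF := indep_prod_aux Cb X hInd hfmeas r S i hiS
      have hmul : ∫ ω, (∏ k ∈ S, g k ω) * g i ω ∂P
          = (∫ ω, ∏ k ∈ S, g k ω ∂P) * ∫ ω, g i ω ∂P := by
        exact hIF.integral_fun_mul_eq_mul_integral
          (Finset.measurable_prod S fun k _ => hgmeas k).aestronglyMeasurable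
          (hgmeas i).aestronglyMeasurable
      calc ∫ ω, ∏ k ∈ insert i S, g k ω ∂P
          = ∫ ω, (∏ k ∈ S, g k ω) * g i ω ∂P := by
            congr 1; funext ω; rw [Finset.prod_insert hiS, mul_comm]
        _ = (∫ ω, ∏ k ∈ S, g k ω ∂P) * ∫ ω, g i ω ∂P := hmul
        _ = ∏ k ∈ insert i S, ∫ ω, g k ω ∂P := by
            rw [Finset.prod_insert hiS, ih, mul_comm]
  -- per-factor bound
  have hfactor : ∀ j, ∫ ω, g j ω ∂P ≤ Real.exp (r * C * (p j * sc j)) := by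
    intro j
    set h : Ω → ℝ := fun ω => Real.exp (r * X j ω) - 1 with hh
    have hhnonneg : ∀ ω, 0 ≤ h ω := fun ω => by
      have h1 : (1:ℝ) ≤ Real.exp (r * X j ω) :=
        Real.one_le_exp (mul_nonneg hr0.le (hXnonneg j ω))
      simp only [hh]; linarith
    have hhmeas : Measurable h := (((hXmeas j).const_mul r).exp).sub measurable_const
    have hgeq : ∀ ω, g j ω = 1 + Cb j ω * h ω := by
      intro ω
      rcases hCb01 j ω with h0 | h1
      · simp [hg, h0]
      · simp [hg, hh, h1]
    have hCbh_int : Integrable (fun ω => Cb j ω * h ω) P := by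
      have := (hgint j).sub (integrable_const (1:ℝ))
      refine this.congr (ae_of_all _ fun ω => ?_)
      simp only [Pi.sub_apply]
      rw [hgeq ω]; ring
    have hindCbX : IndepFun (Cb j) (X j) P := by
      have := hInd.indepFun (i := Sum.inl j) (j := Sum.inr j) (by simp)
      exact this
    have hindCbH : IndepFun (Cb j) h P := by
      have h2 : IndepFun (id ∘ Cb j) ((fun x : ℝ => Real.exp (r * x) - 1) ∘ X j) P :=
        hindCbX.comp measurable_id
          (((measurable_id.const_mul r).exp).sub measurable_const)
      exact h2
    have hmul : ∫ ω, Cb j ω * h ω ∂P = (∫ ω, Cb j ω ∂P) * ∫ ω, h ω ∂P := by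
      have := hindCbH.integral_fun_mul_eq_mul_integral
        (hCbmeas j).aestronglyMeasurable hhmeas.aestronglyMeasurable
      exact this
    have hCbint : ∫ ω, Cb j ω ∂P = p j := by
      have hset : MeasurableSet {ω | Cb j ω = 1} := by
        have : {ω | Cb j ω = 1} = (Cb j) ⁻¹' {1} := rfl
        rw [this]; exact (hCbmeas j) (measurableSet_singleton 1)
      have heq : (fun ω => Cb j ω) = fun ω => Set.indicator {ω | Cb j ω = 1} 1 ω := by
        funext ω
        rcases hCb01 j ω with h0 | h1
        · rw [h0, Set.indicator_of_notMem]
          simp [Set.mem_setOf_eq, h0]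
        · rw [h1, Set.indicator_of_mem]
          · rfl
          · exact h1
      rw [heq, integral_indicator_one hset, measureReal_def, hCbd j, ENNReal.toReal_ofReal (hp0 j)]
    have hhint_bound : ∫ ω, h ω ∂P ≤ r * C * sc j := by
      by_cases hexp : Integrable (fun ω => Real.exp (r * X j ω)) P
      · have : ∫ ω, h ω ∂P = (∫ ω, Real.exp (r * X j ω) ∂P) - 1 := by
          rw [hh]
          rw [integral_sub hexp (integrable_const 1)]
          simp
        rw [this]
        linarith [hmom j]
      · have : ¬ Integrable h P := by
          intro hcon
          apply hexp
          have := hcon.add (integrable_const (1:ℝ))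
          refine this.congr (ae_of_all _ fun ω => ?_)
          simp [hh]
        rw [integral_undef this]
        exact mul_nonneg (mul_nonneg hr0.le hC.le) (hsc j)
    have hhint_nonneg : 0 ≤ ∫ ω, h ω ∂P := integral_nonneg fun ω => hhnonneg ω
    have : ∫ ω, g j ω ∂P = 1 + p j * ∫ ω, h ω ∂P := by
      have hrwg : (fun ω => g j ω) = fun ω => 1 + Cb j ω * h ω := funext hgeq
      rw [hrwg, integral_add (integrable_const 1) hCbh_int, hmul, hCbint]
      simp
    rw [this]
    have h1 : p j * ∫ ω, h ω ∂P ≤ p j * (r * C * sc j) :=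
      mul_le_mul_of_nonneg_left hhint_bound (hp0 j)
    have h2 : 1 + p j * (r * C * sc j) ≤ Real.exp (r * C * (p j * sc j)) := by
      have := Real.add_one_le_exp (r * C * (p j * sc j))
      nlinarith
    nlinarith
  -- combine
  rw [integral_const_mul, hprodint Finset.univ]
  have hbound : ∏ j, ∫ ω, g j ω ∂P ≤ ∏ j, Real.exp (r * C * (p j * sc j)) := by
    refine Finset.prod_le_prod (fun j _ => integral_nonneg fun ω => (Real.exp_pos _).le)
      fun j _ => hfactor j
  have : ∏ j, Real.exp (r * C * (p j * sc j)) = Real.exp (∑ j, r * C * (p j * sc j)) :=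
    (Real.exp_sum _ _).symm
  rw [this] at hbound
  have hsum2 : ∑ j, r * C * (p j * sc j) ≤ 2 * θ * C * (s / c) := by
    have he : ∀ j : J, r * C * (p j * sc j) = 2 * θ * C * (lam * p j * sc j) := by
      intro j; rw [hr]; ring
    simp_rw [he]
    rw [← Finset.mul_sum]
    exact mul_le_mul_of_nonneg_left hsum (by positivity)
  calc Real.exp (2 * θ * s) * ∏ j, ∫ ω, g j ω ∂P
      ≤ Real.exp (2 * θ * s) * Real.exp (∑ j, r * C * (p j * sc j)) := by
        exact mul_le_mul_of_nonneg_left hbound (Real.exp_pos _).le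
    _ = Real.exp (2 * θ * s + ∑ j, r * C * (p j * sc j)) := (Real.exp_add _ _).symm
    _ ≤ Real.exp (2 * θ * s * (1 + C / c)) := by
        apply Real.exp_le_exp.mpr
        have : 2 * θ * s * (1 + C / c) = 2 * θ * s + 2 * θ * C * (s / c) := by
          field_simp
        rw [this]
        linarith [hsum2]
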